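/- (Chi-squared Bayes factor.) For every k > 0, τ > 0, r ≥ 1 and h > 0: ∫_0^∞ p_k(h|λ) · γ(λ; k/2+r, 1/(2τ²)) dλ = g_k(h) · (1+τ²)^{−(k/2+r)} · ₁F₁(k/2+r, k/2; τ²h/(2(1+τ²))). Equivalently, the chi-squared Bayes factor BF₁₀(h|τ²,r) = (∫_0^∞ p_k(h|λ) γ(λ; k/2+r, 1/(2τ²)) dλ)/g_k(h) equals (1+τ²)^{−(k/2+r)} ₁F₁(k/2+r, k/2; τ²h/(2(1+τ²))). -/

import Mathlib

open Real MeasureTheory Filter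

/-- Rising factorial (Pochhammer symbol) `(a)_k`. -/
noncomputable def risingFac (a : ℝ) (k : ℕ) : ℝ := (ascPochhammer ℝ k).eval a

/-- Confluent hypergeometric function `₁F₁(a, b; x)`. -/
noncomputable def oneF1 (a b x : ℝ) : ℝ :=
  ∑' k : ℕ, (risingFac a k / risingFac b k) * x ^ k / (Nat.factorial k : ℝ)

/-- Central chi-square density with `ν` degrees of freedom. -/
noncomputable def chiSqPdf (ν h : ℝ) : ℝ :=
  h ^ (ν / 2 - 1) * Real.exp (-h / 2) / ((2 : ℝ) ^ (ν / 2) * Real.Gamma (ν / 2))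

/-- Noncentral chi-square density with `k` degrees of freedom and noncentrality `lam`. -/
noncomputable def ncChiSqPdf (k lam h : ℝ) : ℝ :=
  ∑' i : ℕ, Real.exp (-lam / 2) * (lam / 2) ^ i / (Nat.factorial i : ℝ) *
    chiSqPdf (k + 2 * i) h

/-- Gamma density with shape `α` and rate `b`. -/
noncomputable def gammaPdf (α b lam : ℝ) : ℝ :=
  b ^ α * lam ^ (α - 1) * Real.exp (-b * lam) / Real.Gamma α

lemma risingFac_pos {a : ℝ} (ha : 0 < a) (n : ℕ) : 0 < risingFac a n :=
  ascPochhammer_pos n a ha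

lemma risingFac_succ (a : ℝ) (n : ℕ) : risingFac a (n + 1) = risingFac a n * (a + n) :=
  ascPochhammer_succ_eval n a

lemma Gamma_add_nat' {s : ℝ} (hs : 0 < s) (n : ℕ) :
    Real.Gamma (s + n) = risingFac s n * Real.Gamma s := by
  induction n with
  | zero => simp [risingFac]
  | succ n ih =>
    have h1 : s + ((n : ℝ) + 1) = (s + n) + 1 := by ring
    push_cast
    rw [h1, Real.Gamma_add_one (by positivity), ih, risingFac_succ]
    push_cast
    ring

lemma integrable_rpow_exp {s c : ℝ} (hs : -1 < s) (hc : 0 < c) :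
    IntegrableOn (fun x : ℝ => x ^ s * Real.exp (-(c * x))) (Set.Ioi 0) := by
  have H := integrableOn_rpow_mul_exp_neg_mul_rpow (p := 1) hs one_pos hc
  refine H.congr_fun (fun x hx => ?_) measurableSet_Ioi
  simp only [Real.rpow_one, neg_mul]

/-- summability of the ₁F₁ series terms -/
lemma summable_oneF1_terms {a b x : ℝ} (ha : 0 < a) (hb : 0 < b) (hx : 0 ≤ x) :
    Summable (fun i : ℕ => risingFac a i / risingFac b i * x ^ i / (Nat.factorial i : ℝ)) := by
  set t : ℕ → ℝ := fun i => risingFac a i / risingFac b i * x ^ i / (Nat.factorial i : ℝ) with ht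
  have htpos : ∀ i, 0 < risingFac a i / risingFac b i / (Nat.factorial i : ℝ) := by
    intro i
    have := risingFac_pos ha i
    have := risingFac_pos hb i
    have := Nat.factorial_pos i
    positivity
  refine summable_of_ratio_norm_eventually_le (r := 1/2) (by norm_num) ?_
  filter_upwards [eventually_ge_atTop ⌈a⌉₊, eventually_ge_atTop ⌈4 * x⌉₊] with i hi1 hi2
  have hA : a ≤ (i : ℝ) := le_trans (Nat.le_ceil a) (by exact_mod_cast hi1)
  have hB : 4 * x ≤ (i : ℝ) := le_trans (Nat.le_ceil _) (by exact_mod_cast hi2)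
  have hi0 : (0 : ℝ) ≤ i := Nat.cast_nonneg i
  have hrec : t (i + 1) = t i * ((a + i) * x / ((b + i) * (i + 1))) := by
    simp only [ht, risingFac_succ, pow_succ, Nat.factorial_succ]
    have h1 : risingFac b i ≠ 0 := (risingFac_pos hb i).ne'
    have h2 : (Nat.factorial i : ℝ) ≠ 0 := Nat.cast_ne_zero.mpr (Nat.factorial_ne_zero i)
    have h3 : (b : ℝ) + i ≠ 0 := by positivity
    have h4 : ((i : ℝ) + 1) ≠ 0 := by positivity
    push_cast
    field_simp
  have hfac : (a + i) * x / ((b + i) * (i + 1)) ≤ 1 / 2 := by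
    rw [div_le_iff₀ (by positivity)]
    nlinarith [mul_nonneg hx hi0, hb.le]
  have hfacnn : 0 ≤ (a + i) * x / ((b + i) * (i + 1)) := by positivity
  have htnn : 0 ≤ t i := by
    have := htpos i
    have : 0 ≤ risingFac a i / risingFac b i * x ^ i / (Nat.factorial i : ℝ) := by
      have h1 := (risingFac_pos ha i).le
      have h2 := (risingFac_pos hb i).le
      have h3 := (Nat.factorial_pos i)
      positivity
    exact this
  rw [hrec, Real.norm_of_nonneg (mul_nonneg htnn hfacnn), Real.norm_of_nonneg htnn]
  calc t i * ((a + i) * x / ((b + i) * (i + 1))) ≤ t i * (1 / 2) :=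
        mul_le_mul_of_nonneg_left hfac htnn
    _ = 1 / 2 * t i := by ring

/-- Theorem 2.5: chi-squared Bayes factor. -/
theorem chi_squared_bayes_factor (k τ r h : ℝ) (hk : 0 < k) (hτ : 0 < τ) (hr : 1 ≤ r)
    (hh : 0 < h) :
    ∫ l in Set.Ioi (0 : ℝ), ncChiSqPdf k l h * gammaPdf (k / 2 + r) (1 / (2 * τ ^ 2)) l
      = chiSqPdf k h * (1 + τ ^ 2) ^ (-(k / 2 + r)) *
          oneF1 (k / 2 + r) (k / 2) (τ ^ 2 * h / (2 * (1 + τ ^ 2))) := by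
  set α : ℝ := k / 2 + r with hα_def
  set b : ℝ := 1 / (2 * τ ^ 2) with hb_def
  set x : ℝ := τ ^ 2 * h / (2 * (1 + τ ^ 2)) with hx_def
  have hτ2 : (0 : ℝ) < τ ^ 2 := by positivity
  have h1τ : (0 : ℝ) < 1 + τ ^ 2 := by positivity
  have hα : 0 < α := by simp only [hα_def]; linarith
  have hb : 0 < b := by simp only [hb_def]; positivity
  have hx : 0 < x := by simp only [hx_def]; positivity
  have hk2 : 0 < k / 2 := by linarith
  set c : ℝ := (1 + τ ^ 2) / (2 * τ ^ 2) with hc_def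
  have hc : 0 < c := by simp only [hc_def]; positivity
  have hbc : b + 1 / 2 = c := by
    simp only [hb_def, hc_def]; field_simp
  set F : ℕ → ℝ → ℝ := fun i l =>
    Real.exp (-l / 2) * (l / 2) ^ i / (Nat.factorial i : ℝ) * chiSqPdf (k + 2 * i) h *
      gammaPdf α b l with hF_def
  set C : ℕ → ℝ := fun i =>
    b ^ α / ((Nat.factorial i : ℝ) * 2 ^ i * Real.Gamma α) * chiSqPdf (k + 2 * i) h with hC_def
  -- pointwise form of F on Ioi 0
  have hFform : ∀ i : ℕ, ∀ l ∈ Set.Ioi (0 : ℝ),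
      F i l = C i * (l ^ (α + i - 1) * Real.exp (-(c * l))) := by
    intro i l hl
    rw [Set.mem_Ioi] at hl
    simp only [hF_def, hC_def, gammaPdf]
    have e1 : l ^ (α + (i : ℝ) - 1) = l ^ (α - 1) * l ^ i := by
      rw [← Real.rpow_natCast l i, ← Real.rpow_add hl]
      ring_nf
    have e2 : Real.exp (-(c * l)) = Real.exp (-l / 2) * Real.exp (-b * l) := by
      rw [← Real.exp_add]
      congr 1
      rw [← hbc]; ring
    rw [e1, e2]
    have h2i : ((2 : ℝ)) ^ i ≠ 0 := by positivity
    have hfi : (Nat.factorial i : ℝ) ≠ 0 := Nat.cast_ne_zero.mpr (Nat.factorial_ne_zero i)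
    have hGα : Real.Gamma α ≠ 0 := (Real.Gamma_pos_of_pos hα).ne'
    field_simp [div_pow]
    ring
    simp only [mul_assoc, ← mul_pow]; norm_num
  -- each F i is integrable on Ioi 0
  have hFint : ∀ i : ℕ, IntegrableOn (F i) (Set.Ioi 0) := by
    intro i
    have base : IntegrableOn (fun l : ℝ => C i * (l ^ (α + i - 1) * Real.exp (-(c * l))))
        (Set.Ioi 0) :=
      (integrable_rpow_exp (s := α + i - 1)
        (by push_cast; linarith [Nat.cast_nonneg (α := ℝ) i]) hc).const_mul (C i)
    exact base.congr_fun (fun l hl => (hFform i l hl).symm) measurableSet_Ioi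
  -- value of each integral
  have hGammaInt : ∀ i : ℕ, ∫ l in Set.Ioi (0 : ℝ), F i l
      = C i * ((1 / c) ^ (α + i) * Real.Gamma (α + i)) := by
    intro i
    rw [setIntegral_congr_fun measurableSet_Ioi (hFform i)]
    rw [MeasureTheory.integral_const_mul]
    congr 1
    exact integral_rpow_mul_exp_neg_mul_Ioi (by positivity) hc
  -- the key algebraic identity
  set D : ℝ := chiSqPdf k h * (1 + τ ^ 2) ^ (-α) with hD_def
  set t : ℕ → ℝ := fun i => risingFac α i / risingFac (k / 2) i * x ^ i /
      (Nat.factorial i : ℝ) with ht_def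
  have key : ∀ i : ℕ, C i * ((1 / c) ^ (α + i) * Real.Gamma (α + i)) = D * t i := by
    intro i
    have e1 : Real.Gamma (α + i) = risingFac α i * Real.Gamma α := Gamma_add_nat' hα i
    have e2 : (k + 2 * (i : ℝ)) / 2 = k / 2 + i := by ring
    have e3 : Real.Gamma (k / 2 + i) = risingFac (k / 2) i * Real.Gamma (k / 2) :=
      Gamma_add_nat' hk2 i
    have e4 : h ^ (k / 2 + (i : ℝ) - 1) = h ^ (k / 2 - 1) * h ^ i := by
      rw [← Real.rpow_natCast h i, ← Real.rpow_add hh]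
      ring_nf
    have e5 : (2 : ℝ) ^ (k / 2 + (i : ℝ)) = 2 ^ (k / 2) * 2 ^ i := by
      rw [← Real.rpow_natCast 2 i, ← Real.rpow_add two_pos]
    have e6 : (1 / c) ^ (α + (i : ℝ)) = (1 / c) ^ α * (1 / c) ^ i := by
      rw [← Real.rpow_natCast (1 / c) i, ← Real.rpow_add (by positivity)]
    have ebc : (1 + τ ^ 2) ^ (-α) = b ^ α * (1 / c) ^ α := by
      rw [← Real.mul_rpow hb.le (by positivity), Real.rpow_neg h1τ.le,
        ← Real.inv_rpow h1τ.le]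
      congr 1
      simp only [hb_def, hc_def]
      field_simp
    have exi : x ^ i = h ^ i * (1 / c) ^ i / (2 ^ i * 2 ^ i) := by
      rw [← mul_pow, ← mul_pow, ← div_pow]
      congr 1
      simp only [hx_def, hc_def]
      field_simp
    simp only [hC_def, hD_def, ht_def, chiSqPdf, e2, e1, e3, e4, e5, e6, ebc, exi]
    have h2i : ((2 : ℝ)) ^ i ≠ 0 := by positivity
    have hfi : (Nat.factorial i : ℝ) ≠ 0 := Nat.cast_ne_zero.mpr (Nat.factorial_ne_zero i)
    have hGα : Real.Gamma α ≠ 0 := (Real.Gamma_pos_of_pos hα).ne'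
    have hGk : Real.Gamma (k / 2) ≠ 0 := (Real.Gamma_pos_of_pos hk2).ne'
    have hRF : risingFac (k / 2) i ≠ 0 := (risingFac_pos hk2 i).ne'
    have h2k : ((2 : ℝ)) ^ (k / 2) ≠ 0 := by positivity
    field_simp
  -- nonnegativity of F on Ioi 0
  have hFnn : ∀ i : ℕ, ∀ l ∈ Set.Ioi (0 : ℝ), 0 ≤ F i l := by
    intro i l hl
    rw [Set.mem_Ioi] at hl
    simp only [hF_def, chiSqPdf, gammaPdf]
    have hg1 : (0 : ℝ) ≤ Real.Gamma ((k + 2 * i) / 2) :=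
      Real.Gamma_nonneg_of_nonneg (by positivity)
    have hg2 : (0 : ℝ) ≤ Real.Gamma α := Real.Gamma_nonneg_of_nonneg hα.le
    positivity
  -- summability of t
  have ht_summable : Summable t := summable_oneF1_terms hα hk2 hx.le
  -- summability of the integrals of norms
  have hnorm_eq : ∀ i : ℕ, (∫ l in Set.Ioi (0 : ℝ), ‖F i l‖) = D * t i := by
    intro i
    rw [setIntegral_congr_fun measurableSet_Ioi
      (fun l hl => Real.norm_of_nonneg (hFnn i l hl)), hGammaInt i, key i]
  have hSum : Summable (fun i : ℕ => ∫ l in Set.Ioi (0 : ℝ), ‖F i l‖) := by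
    simp only [hnorm_eq]
    exact ht_summable.mul_left D
  -- rewrite the integrand as a tsum
  have hpt : ∀ l : ℝ, ncChiSqPdf k l h * gammaPdf α b l = ∑' i : ℕ, F i l := by
    intro l
    simp only [ncChiSqPdf, hF_def]
    exact (tsum_mul_right).symm
  calc ∫ l in Set.Ioi (0 : ℝ), ncChiSqPdf k l h * gammaPdf α b l
      = ∫ l in Set.Ioi (0 : ℝ), ∑' i : ℕ, F i l := by simp only [hpt]
    _ = ∑' i : ℕ, ∫ l in Set.Ioi (0 : ℝ), F i l :=
        (MeasureTheory.integral_tsum_of_summable_integral_norm hFint hSum).symm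
    _ = ∑' i : ℕ, D * t i := by
        refine tsum_congr fun i => ?_
        rw [hGammaInt i, key i]
    _ = D * ∑' i : ℕ, t i := tsum_mul_left
    _ = chiSqPdf k h * (1 + τ ^ 2) ^ (-α) * oneF1 α (k / 2) x := by
        rw [hD_def, oneF1]
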